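/- Let X = (X₁, X₂, X₃) ~ N(0, Σ) with Σ positive definite, let N be a standard square root of Σ, and set κ = √(𝟏ᵀ Σ⁻¹ 𝟏). Then for all t, Prob(min(X₁,X₂,X₃) ≥ t) = μ(tκ e₁ + C_N), where μ is the standard Gaussian measure N(0, I) on ℝ³ and C_N = {u : N u ≥ 0}. -/

import Mathlib

open Matrix MeasureTheory

/-- The centered multivariate Gaussian measure `N(0, S)` on `ℝⁿ`, defined by its density
with respect to Lebesgue measure. -/
noncomputable def gaussianOfCov {n : ℕ} (S : Matrix (Fin n) (Fin n) ℝ) :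
    Measure (Fin n → ℝ) :=
  volume.withDensity fun u =>
    ENNReal.ofReal
      (((2 * Real.pi) ^ n * S.det) ^ (-(1 : ℝ) / 2) *
        Real.exp (-(1 / 2) * (u ⬝ᵥ S⁻¹.mulVec u)))

/-- Let `X = (X₁,X₂,X₃) ~ N(0,Σ)` with `Σ` positive definite, `N` a standard square root of
`Σ`, and `κ = √(𝟏ᵀ Σ⁻¹ 𝟏)`. Then `Prob(min(X₁,X₂,X₃) ≥ t) = μ(tκ e₁ + C_N)`, where `μ` is
the standard Gaussian measure `N(0, I)` on `ℝ³` and `C_N = {u : N u ≥ 0}`. -/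
theorem stmt_7 (S N : Matrix (Fin 3) (Fin 3) ℝ)
    (hS : S.PosDef) (hN : N * Nᵀ = S)
    (κ : ℝ) (hκ : κ = Real.sqrt ((fun _ => (1 : ℝ)) ⬝ᵥ S⁻¹.mulVec (fun _ => (1 : ℝ))))
    (hstd : N.mulVec (Pi.single 0 1) = κ⁻¹ • (fun _ => (1 : ℝ)))
    (t : ℝ) :
    gaussianOfCov S {x | ∀ i, t ≤ x i} =
      gaussianOfCov (1 : Matrix (Fin 3) (Fin 3) ℝ)
        ((fun u => (t * κ) • (Pi.single 0 1 : Fin 3 → ℝ) + u) ''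
          {u | ∀ i, 0 ≤ N.mulVec u i}) := by
  classical
  have hSdet : 0 < S.det := hS.det_pos
  have hdet2 : S.det = N.det ^ 2 := by
    rw [← hN, Matrix.det_mul, Matrix.det_transpose, sq]
  have hNdet : N.det ≠ 0 := by
    intro h; rw [hdet2, h] at hSdet; simp at hSdet
  -- κ > 0
  have hone : (fun _ => (1:ℝ)) ≠ (0 : Fin 3 → ℝ) := by
    intro h; have := congrFun h 0; simp at this
  have hq : 0 < (fun _ => (1:ℝ)) ⬝ᵥ S⁻¹.mulVec (fun _ => (1:ℝ)) := by
    have := hS.inv.dotProduct_mulVec_pos hone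
    simpa using this
  have hκ0 : 0 < κ := by rw [hκ]; exact Real.sqrt_pos.mpr hq
  -- the set equality
  have hset : ((fun u => (t * κ) • (Pi.single 0 1 : Fin 3 → ℝ) + u) ''
      {u | ∀ i, 0 ≤ N.mulVec u i}) = {u | ∀ i, t ≤ N.mulVec u i} := by
    have key : ∀ (w : Fin 3 → ℝ) (i : Fin 3),
        N.mulVec ((t * κ) • (Pi.single 0 1 : Fin 3 → ℝ) + w) i = t + N.mulVec w i := by
      intro w i
      rw [Matrix.mulVec_add, Matrix.mulVec_smul, hstd]
      have : t * κ * κ⁻¹ = t := by field_simp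
      simp [smul_eq_mul, ← mul_assoc, this]
    ext u
    simp only [Set.mem_image, Set.mem_setOf_eq]
    constructor
    · rintro ⟨v, hv, rfl⟩ i
      rw [key]
      linarith [hv i]
    · intro hu
      refine ⟨u - (t * κ) • (Pi.single 0 1 : Fin 3 → ℝ), fun i => ?_, by abel⟩
      have := key (u - (t * κ) • (Pi.single 0 1 : Fin 3 → ℝ)) i
      simp only [add_sub_cancel] at this
      linarith [hu i, this]
  rw [hset]
  -- measurable set E
  set E : Set (Fin 3 → ℝ) := {x | ∀ i, t ≤ x i} with hE_def
  have hE : MeasurableSet E := by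
    have : E = ⋂ i, {x : Fin 3 → ℝ | t ≤ x i} := by ext x; simp [hE_def]
    rw [this]
    exact MeasurableSet.iInter fun i => measurableSet_le measurable_const (measurable_pi_apply i)
  -- the linear map
  set T : (Fin 3 → ℝ) →ₗ[ℝ] (Fin 3 → ℝ) := Matrix.toLin' N with hT_def
  have hTapp : ∀ u, T u = N.mulVec u := fun u => Matrix.toLin'_apply N u
  have hTmeas : Measurable T := T.continuous_of_finiteDimensional.measurable
  have hTdet : LinearMap.det T = N.det := LinearMap.det_toLin' N
  have hpre : {u | ∀ i, t ≤ N.mulVec u i} = T ⁻¹' E := by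
    ext u; simp [hE_def, hTapp]
  rw [hpre]
  -- densities
  set c : ℝ := ((2 * Real.pi) ^ 3 * 1) ^ (-(1 : ℝ) / 2) with hc_def
  set g : (Fin 3 → ℝ) → ENNReal := fun x =>
    ENNReal.ofReal (c * Real.exp (-(1 / 2) * (N⁻¹.mulVec x ⬝ᵥ N⁻¹.mulVec x))) with hg_def
  have hginv : ∀ u, g (T u) = ENNReal.ofReal (c * Real.exp (-(1 / 2) * (u ⬝ᵥ u))) := by
    intro u
    have : N⁻¹.mulVec (T u) = u := by
      rw [hTapp, Matrix.mulVec_mulVec, Matrix.nonsing_inv_mul N (isUnit_iff_ne_zero.mpr hNdet),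
        Matrix.one_mulVec]
    rw [hg_def]; simp only [this]
  have hgmeas : Measurable g := by
    apply Measurable.ennreal_ofReal
    apply Measurable.const_mul
    apply Real.measurable_exp.comp
    apply Measurable.const_mul
    simp only [dotProduct]
    exact Finset.measurable_sum _ fun i _ => by
      apply Measurable.mul <;>
      · simp only [Matrix.mulVec, dotProduct]
        exact Finset.measurable_sum _ fun j _ => (measurable_pi_apply j).const_mul _
  -- quadratic form identity
  have hquad : ∀ x : Fin 3 → ℝ, N⁻¹.mulVec x ⬝ᵥ N⁻¹.mulVec x = x ⬝ᵥ S⁻¹.mulVec x := by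
    intro x
    have hSinv : S⁻¹ = (N⁻¹)ᵀ * N⁻¹ := by
      rw [← hN, Matrix.mul_inv_rev, Matrix.transpose_nonsing_inv]
    have h2 := Matrix.dotProduct_mulVec x (N⁻¹)ᵀ (N⁻¹.mulVec x)
    rw [Matrix.vecMul_transpose] at h2
    rw [hSinv, ← Matrix.mulVec_mulVec, h2]
  -- constant identity
  have hconst : ((2 * Real.pi) ^ 3 * S.det) ^ (-(1 : ℝ) / 2) = |N.det|⁻¹ * c := by
    have h2pi : (0:ℝ) ≤ (2 * Real.pi) ^ 3 := by positivity
    rw [hc_def, mul_one, hdet2,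
      Real.mul_rpow h2pi (sq_nonneg _)]
    have : ((N.det ^ 2 : ℝ)) ^ (-(1:ℝ)/2) = |N.det|⁻¹ := by
      rw [show (-(1:ℝ)/2) = -(1/2) by ring, Real.rpow_neg (sq_nonneg _),
        ← Real.sqrt_eq_rpow, Real.sqrt_sq_eq_abs]
    rw [this]; ring
  -- pointwise density relation
  have hdens : ∀ x : Fin 3 → ℝ,
      ENNReal.ofReal (((2 * Real.pi) ^ 3 * S.det) ^ (-(1 : ℝ) / 2) *
          Real.exp (-(1 / 2) * (x ⬝ᵥ S⁻¹.mulVec x)))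
        = ENNReal.ofReal |N.det|⁻¹ * g x := by
    intro x
    rw [hg_def]
    rw [← ENNReal.ofReal_mul (by positivity), ← hquad, hconst]
    ring_nf
  -- main computation
  unfold gaussianOfCov
  rw [withDensity_apply _ hE, withDensity_apply _ (hE.preimage hTmeas)]
  simp only [inv_one, Matrix.one_mulVec, Matrix.det_one, ← hc_def]
  calc ∫⁻ x in E, ENNReal.ofReal (((2 * Real.pi) ^ 3 * S.det) ^ (-(1 : ℝ) / 2) *
          Real.exp (-(1 / 2) * (x ⬝ᵥ S⁻¹.mulVec x))) ∂volume
      = ∫⁻ x in E, ENNReal.ofReal |N.det|⁻¹ * g x ∂volume := by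
        exact lintegral_congr fun x => hdens x
    _ = ENNReal.ofReal |N.det|⁻¹ * ∫⁻ x in E, g x ∂volume :=
        lintegral_const_mul' _ _ ENNReal.ofReal_ne_top
    _ = ENNReal.ofReal |N.det|⁻¹ * ∫⁻ x, E.indicator g x ∂volume := by
        rw [lintegral_indicator hE]
    _ = ∫⁻ x, E.indicator g x ∂(Measure.map T volume) := by
        rw [Real.map_linearMap_volume_pi_eq_smul_volume_pi (by rw [hTdet]; exact hNdet),
          lintegral_smul_measure, hTdet, abs_inv, smul_eq_mul]
    _ = ∫⁻ u in T ⁻¹' E, ENNReal.ofReal (c * Real.exp (-(1 / 2) * (u ⬝ᵥ u))) ∂volume := by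
        rw [lintegral_map (hgmeas.indicator hE) hTmeas]
        rw [← lintegral_indicator (hE.preimage hTmeas)]
        refine lintegral_congr fun u => ?_
        by_cases hu : u ∈ T ⁻¹' E
        · rw [Set.indicator_of_mem hu, Set.indicator_of_mem (show T u ∈ E from hu) g, hginv]
        · rw [Set.indicator_of_notMem hu, Set.indicator_of_notMem (show T u ∉ E from hu) g]
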